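/- arXiv:2206.01054 — 2 statements merged into one kernel-verified Lean document; each statement's English description precedes it below -/
import Mathlib

section
/- For every m ≥ 1, the automorphism group of the reduced power graph RP(Z_{2^m}) of the cyclic group of order 2^m is isomorphic to Z_2 × ∏_{i=2}^{m} S_{φ(2^i)}, where φ is Euler's totient function (so φ(2^i) = 2^{i-1}) and S_k denotes the symmetric group on k letters. -/
open Subgroup Set

variable (G : Type*) [Group G]

/-- Arc of the directed reduced power graph `→RP(G)`: from `x` to `y` iff `⟨y⟩ ⊊ ⟨x⟩`. -/
def rpArc (x y : G) : Prop := zpowers y < zpowers x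

/-- Adjacency in the undirected reduced power graph `RP(G)`:
`x` and `y` are adjacent iff `⟨x⟩ ⊊ ⟨y⟩` or `⟨y⟩ ⊊ ⟨x⟩`. -/
def rpAdj (x y : G) : Prop := zpowers x < zpowers y ∨ zpowers y < zpowers x

/-- `x ≃ y` iff `x` and `y` have the same neighbourhood in `RP(G)`. -/
def simEq (x y : G) : Prop := ∀ z : G, rpAdj G x z ↔ rpAdj G y z

/-- The `≃`-class `x̂` of `x`. -/
def hatCls (x : G) : Set G := {y | simEq G y x}

/-- The `∼`-class `[x]` of `x`: the set of generators of `⟨x⟩`. -/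
def genCls (x : G) : Set G := {y | zpowers y = zpowers x}

/-- The automorphism group of the directed reduced power graph `→RP(G)`,
as a subgroup of the permutations of `G`. -/
def DRPAut : Subgroup (Equiv.Perm G) where
  carrier := {π | ∀ x y : G, rpArc G (π x) (π y) ↔ rpArc G x y}
  one_mem' := fun _ _ => Iff.rfl
  mul_mem' := by
    intro a b ha hb x y
    simp only [Equiv.Perm.mul_apply]
    exact (ha (b x) (b y)).trans (hb x y)
  inv_mem' := by
    intro a ha x y
    have h := ha (a⁻¹ x) (a⁻¹ y)
    simp only [Equiv.Perm.inv_def, Equiv.apply_symm_apply] at h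
    exact h.symm

/-- The automorphism group of the undirected reduced power graph `RP(G)`,
as a subgroup of the permutations of `G`. -/
def RPAut : Subgroup (Equiv.Perm G) where
  carrier := {π | ∀ x y : G, rpAdj G (π x) (π y) ↔ rpAdj G x y}
  one_mem' := fun _ _ => Iff.rfl
  mul_mem' := by
    intro a b ha hb x y
    simp only [Equiv.Perm.mul_apply]
    exact (ha (b x) (b y)).trans (hb x y)
  inv_mem' := by
    intro a ha x y
    have h := ha (a⁻¹ x) (a⁻¹ y)
    simp only [Equiv.Perm.inv_def, Equiv.apply_symm_apply] at h
    exact h.symm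

/-- `⟨x⟩` is a maximal cyclic subgroup of `G`. -/
def IsMaxCyc (x : G) : Prop := ∀ y : G, zpowers x ≤ zpowers y → zpowers x = zpowers y

/-- The `≃`-class of `x` is of Type I: it is a single `∼`-class, `x̂ = [x]`. -/
def TypeI (x : G) : Prop := hatCls G x = genCls G x

/-- The `≃`-class of `x` is of Type II: it is a union of `r ≥ 2` `∼`-classes whose
cyclic subgroups are distinct maximal cyclic subgroups of `G`, all of the same order. -/
def TypeII (x : G) : Prop :=
  (∃ y z : G, simEq G y x ∧ simEq G z x ∧ zpowers y ≠ zpowers z) ∧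
  ∀ y : G, simEq G y x → IsMaxCyc G y ∧ orderOf y = orderOf x

/-- The `≃`-class of `x` is of Type III: `G` is non-cyclic, the class is a union of
`r ≥ 2` `∼`-classes whose cyclic subgroups are maximal cyclic subgroups of prime order,
and at least two distinct orders occur. -/
def TypeIII (x : G) : Prop :=
  ¬ IsCyclic G ∧
  (∃ y z : G, simEq G y x ∧ simEq G z x ∧ orderOf y ≠ orderOf z) ∧
  ∀ y : G, simEq G y x → IsMaxCyc G y ∧ (orderOf y).Prime

/-- The `≃`-class of `x` is of Type IV with parameter `(p, q)`: it is a union of exactly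
two `∼`-classes of elements of distinct prime orders `p` and `q`, the corresponding cyclic
subgroups being non-maximal when `G` is non-cyclic, and maximal when `G` is cyclic. -/
def TypeIV (x : G) (p q : ℕ) : Prop :=
  p.Prime ∧ q.Prime ∧ p ≠ q ∧
  (∃ x₁ x₂ : G, simEq G x₁ x ∧ simEq G x₂ x ∧ orderOf x₁ = p ∧ orderOf x₂ = q ∧
     ∀ y : G, simEq G y x → zpowers y = zpowers x₁ ∨ zpowers y = zpowers x₂) ∧
  ((¬ IsCyclic G ∧ ∀ y : G, simEq G y x → ¬ IsMaxCyc G y) ∨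
   (IsCyclic G ∧ ∀ y : G, simEq G y x → IsMaxCyc G y))

/-- A `P(G)`-permutation: a permutation `σ` of `G` preserving element orders, mapping each
`∼`-class `[x]` onto `[x^σ]`, and preserving inclusion and non-inclusion of cyclic subgroups. -/
def IsPPerm (σ : Equiv.Perm G) : Prop :=
  (∀ x : G, orderOf (σ x) = orderOf x) ∧
  (∀ x : G, σ '' genCls G x = genCls G (σ x)) ∧
  (∀ x y : G, zpowers y ≤ zpowers x ↔ zpowers (σ y) ≤ zpowers (σ x))

/-- A permutation of `G` fixing every `≃`-class setwise. -/
def FixesClasses (τ : Equiv.Perm G) : Prop := ∀ x : G, simEq G (τ x) x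

section AuxRP

open Finset Nat

variable {α : Type*} [Group α] [Fintype α]

lemma auxMemZpowers (hG : IsCyclic α) {x y : α} (h : orderOf x ∣ orderOf y) :
    x ∈ zpowers y := by
  classical
  have hy : 0 < orderOf y := orderOf_pos y
  have hsub : (Finset.univ.filter (fun a : α => a ∈ zpowers y)) ⊆
      Finset.univ.filter (fun a : α => a ^ orderOf y = 1) := by
    intro a ha
    simp only [Finset.mem_filter, Finset.mem_univ, true_and] at ha ⊢
    obtain ⟨k, hk⟩ := Subgroup.mem_zpowers_iff.mp ha
    calc a ^ orderOf y = (y ^ k) ^ ((orderOf y : ℤ)) := by rw [hk, zpow_natCast]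
      _ = (y ^ ((orderOf y : ℤ))) ^ k := by rw [← zpow_mul, ← zpow_mul, mul_comm]
      _ = 1 := by rw [zpow_natCast, pow_orderOf_eq_one, one_zpow]
  have h1 : #(Finset.univ.filter (fun a : α => a ∈ zpowers y)) = orderOf y := by
    rw [← Fintype.card_subtype]
    exact Fintype.card_zpowers
  have h2 : #(Finset.univ.filter (fun a : α => a ^ orderOf y = 1)) ≤ orderOf y := by
    haveI := hG
    simpa using IsCyclic.card_pow_eq_one_le (α := α) hy
  have heq := Finset.eq_of_subset_of_card_le hsub (h2.trans_eq h1.symm)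
  have hx : x ∈ Finset.univ.filter (fun a : α => a ^ orderOf y = 1) := by
    simp only [Finset.mem_filter, Finset.mem_univ, true_and]
    exact orderOf_dvd_iff_pow_eq_one.mp h
  rw [← heq] at hx
  simpa using hx

lemma auxZpowersLe (hG : IsCyclic α) (x y : α) :
    zpowers x ≤ zpowers y ↔ orderOf x ∣ orderOf y := by
  constructor
  · intro h
    exact orderOf_dvd_of_mem_zpowers (h (Subgroup.mem_zpowers x))
  · intro h
    exact Subgroup.zpowers_le.mpr (auxMemZpowers hG h)

variable {m : ℕ}

lemma auxClassify (hcard : Fintype.card α = 2 ^ m) (x : α) : ∃ k, k ≤ m ∧ orderOf x = 2 ^ k := by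
  have hdvd : orderOf x ∣ 2 ^ m := hcard ▸ orderOf_dvd_card
  obtain ⟨k, hk, he⟩ := (Nat.dvd_prime_pow Nat.prime_two).mp hdvd
  exact ⟨k, hk, he⟩

lemma auxDvdTotal (hcard : Fintype.card α = 2 ^ m) (x y : α) :
    orderOf x ∣ orderOf y ∨ orderOf y ∣ orderOf x := by
  obtain ⟨a, _, ha⟩ := auxClassify hcard x
  obtain ⟨b, _, hb⟩ := auxClassify hcard y
  rcases le_total a b with h | h
  · exact Or.inl (ha ▸ hb ▸ pow_dvd_pow 2 h)
  · exact Or.inr (hb ▸ ha ▸ pow_dvd_pow 2 h)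

lemma auxOrderEqIff (hG : IsCyclic α) (hcard : Fintype.card α = 2 ^ m) (x y : α) :
    zpowers x = zpowers y ↔ orderOf x = orderOf y := by
  constructor
  · intro h
    exact Nat.dvd_antisymm ((auxZpowersLe hG x y).mp h.le) ((auxZpowersLe hG y x).mp h.ge)
  · intro h
    exact le_antisymm ((auxZpowersLe hG x y).mpr h.dvd) ((auxZpowersLe hG y x).mpr h.symm.dvd)

lemma auxRpAdjIff (hG : IsCyclic α) (hcard : Fintype.card α = 2 ^ m) (x y : α) :
    rpAdj α x y ↔ orderOf x ≠ orderOf y := by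
  constructor
  · rintro (h | h) <;> intro heq
    · exact h.ne ((auxOrderEqIff hG hcard x y).mpr heq)
    · exact h.ne ((auxOrderEqIff hG hcard y x).mpr heq.symm)
  · intro hne
    rcases auxDvdTotal hcard x y with h | h
    · exact Or.inl (lt_of_le_of_ne ((auxZpowersLe hG x y).mpr h)
        (fun e => hne ((auxOrderEqIff hG hcard x y).mp e)))
    · exact Or.inr (lt_of_le_of_ne ((auxZpowersLe hG y x).mpr h)
        (fun e => hne (((auxOrderEqIff hG hcard y x).mp e).symm)))

lemma auxMemRPAut (hG : IsCyclic α) (hcard : Fintype.card α = 2 ^ m) (π : Equiv.Perm α) :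
    π ∈ RPAut α ↔ ∀ x y : α, (orderOf (π x) = orderOf (π y) ↔ orderOf x = orderOf y) := by
  have hmem : π ∈ RPAut α ↔ ∀ x y : α, (rpAdj α (π x) (π y) ↔ rpAdj α x y) := Iff.rfl
  rw [hmem]
  constructor <;> intro h x y
  · have := h x y
    rw [auxRpAdjIff hG hcard, auxRpAdjIff hG hcard] at this
    exact not_iff_not.mp this
  · rw [auxRpAdjIff hG hcard, auxRpAdjIff hG hcard]
    exact not_iff_not.mpr (h x y)

lemma auxCardOrder (hG : IsCyclic α) {d : ℕ} (hd : d ∣ Fintype.card α) :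
    #(Finset.univ.filter (fun a : α => orderOf a = d)) = Nat.totient d := by
  haveI := hG
  classical
  simpa using IsCyclic.card_orderOf_eq_totient (α := α) hd

end AuxRP

section AuxRP2

open Finset Nat

variable {α : Type*} [Group α] [Fintype α] {m : ℕ}

lemma auxTotientEq (hG : IsCyclic α) {π : Equiv.Perm α}
    (hπ : ∀ x y : α, (orderOf (π x) = orderOf (π y) ↔ orderOf x = orderOf y)) (x : α) :
    Nat.totient (orderOf (π x)) = Nat.totient (orderOf x) := by
  classical
  have himg : (Finset.univ.filter (fun y : α => orderOf y = orderOf x)).image π =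
      Finset.univ.filter (fun y : α => orderOf y = orderOf (π x)) := by
    ext z
    simp only [Finset.mem_image, Finset.mem_filter, Finset.mem_univ, true_and]
    constructor
    · rintro ⟨y, hy, rfl⟩
      exact (hπ y x).mpr hy
    · intro hz
      refine ⟨π.symm z, (hπ (π.symm z) x).mp ?_, by simp⟩
      simpa using hz
  calc Nat.totient (orderOf (π x))
      = #(Finset.univ.filter (fun y : α => orderOf y = orderOf (π x))) :=
        (auxCardOrder hG orderOf_dvd_card).symm
    _ = #((Finset.univ.filter (fun y : α => orderOf y = orderOf x)).image π) := by rw [himg]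
    _ = #(Finset.univ.filter (fun y : α => orderOf y = orderOf x)) :=
        Finset.card_image_of_injective _ π.injective
    _ = Nat.totient (orderOf x) := auxCardOrder hG orderOf_dvd_card

lemma auxSmallTotient {d : ℕ} (hd : d ∣ 2) : Nat.totient d = 1 := by
  rcases (Nat.dvd_prime Nat.prime_two).mp hd with h | h <;> simp [h]

lemma auxSmallInj (hG : IsCyclic α) {x y : α} (hx : orderOf x ∣ 2)
    (hxy : orderOf x = orderOf y) : x = y := by
  classical
  have h1 : #(Finset.univ.filter (fun a : α => orderOf a = orderOf x)) = 1 := by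
    rw [auxCardOrder hG orderOf_dvd_card, auxSmallTotient hx]
  refine Finset.card_le_one.mp h1.le x ?_ y ?_
  · simp
  · simp [hxy.symm]

lemma auxPowTotientOne {b : ℕ} (h : Nat.totient (2 ^ b) = 1) : (2 : ℕ) ^ b ∣ 2 := by
  rcases Nat.eq_zero_or_pos b with hb | hb
  · subst hb; simp
  · rw [Nat.totient_prime_pow Nat.prime_two hb] at h
    simp only [Nat.mul_one, show 2 - 1 = 1 from rfl] at h
    have : b - 1 = 0 := by
      by_contra hne
      have : 2 ≤ 2 ^ (b - 1) := by
        calc (2:ℕ) = 2 ^ 1 := (pow_one 2).symm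
        _ ≤ 2 ^ (b-1) := Nat.pow_le_pow_right (by norm_num) (by omega)
      omega
    have hb1 : b = 1 := by omega
    simp [hb1]

lemma auxK1 (hG : IsCyclic α) (hcard : Fintype.card α = 2 ^ m) {π : Equiv.Perm α}
    (hπ : ∀ x y : α, (orderOf (π x) = orderOf (π y) ↔ orderOf x = orderOf y))
    {x : α} (hx : orderOf x ∣ 2) : orderOf (π x) ∣ 2 := by
  have ht := auxTotientEq hG hπ x
  rw [auxSmallTotient hx] at ht
  obtain ⟨b, _, hb⟩ := auxClassify hcard (π x)
  rw [hb] at ht ⊢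
  exact auxPowTotientOne ht

lemma auxK2 (hG : IsCyclic α) (hcard : Fintype.card α = 2 ^ m) {π : Equiv.Perm α}
    (hπ : ∀ x y : α, (orderOf (π x) = orderOf (π y) ↔ orderOf x = orderOf y))
    {x : α} (hx : ¬ orderOf x ∣ 2) : orderOf (π x) = orderOf x := by
  have ht := auxTotientEq hG hπ x
  obtain ⟨a, _, ha⟩ := auxClassify hcard x
  obtain ⟨b, _, hb⟩ := auxClassify hcard (π x)
  have ha2 : 2 ≤ a := by
    by_contra h
    exact hx (ha ▸ (by calc (2:ℕ)^a ∣ 2^1 := pow_dvd_pow 2 (by omega)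
                        _ = 2 := pow_one 2))
  have hta : Nat.totient (2 ^ a) = 2 ^ (a - 1) := by
    rw [Nat.totient_prime_pow Nat.prime_two (by omega)]
    simp
  have hb1 : 1 ≤ b := by
    by_contra h
    have : b = 0 := by omega
    rw [ha, hb, this, hta] at ht
    simp at ht
    have : 2 ≤ 2 ^ (a - 1) := by
      calc (2:ℕ) = 2 ^ 1 := (pow_one 2).symm
      _ ≤ 2 ^ (a-1) := Nat.pow_le_pow_right (by norm_num) (by omega)
    omega
  have htb : Nat.totient (2 ^ b) = 2 ^ (b - 1) := by
    rw [Nat.totient_prime_pow Nat.prime_two (by omega)]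
    simp
  rw [ha, hb, hta, htb] at ht
  have : b - 1 = a - 1 := Nat.pow_right_injective (le_refl 2) ht
  have : b = a := by omega
  rw [ha, hb, this]

lemma auxCardA (hG : IsCyclic α) (hcard : Fintype.card α = 2 ^ m) {i : ℕ} (him : i ≤ m) :
    Fintype.card {x : α // orderOf x = 2 ^ i} = Nat.totient (2 ^ i) := by
  classical
  rw [Fintype.card_subtype]
  exact auxCardOrder hG (hcard ▸ pow_dvd_pow 2 him)

lemma auxCardS (hG : IsCyclic α) (hcard : Fintype.card α = 2 ^ m) (hm : 1 ≤ m) :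
    Fintype.card {x : α // orderOf x ∣ 2} = 2 := by
  classical
  rw [Fintype.card_subtype]
  have hsplit : (Finset.univ.filter (fun x : α => orderOf x ∣ 2)) =
      (Finset.univ.filter (fun x : α => orderOf x = 1)) ∪
      (Finset.univ.filter (fun x : α => orderOf x = 2)) := by
    ext x
    simp [Nat.dvd_prime Nat.prime_two]
  rw [hsplit, Finset.card_union_of_disjoint]
  · rw [auxCardOrder hG (one_dvd _), auxCardOrder hG (hcard ▸ (by
      calc (2:ℕ) = 2^1 := (pow_one 2).symm
      _ ∣ 2^m := pow_dvd_pow 2 hm))]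
    simp
  · rw [Finset.disjoint_left]
    intro a ha hb
    simp only [Finset.mem_filter, Finset.mem_univ, true_and] at ha hb
    omega

end AuxRP2

/-- `Aut(RP(ℤ_{2^m})) ≅ ℤ₂ × ∏_{i=2}^{m} S_{φ(2^i)}` for every `m ≥ 1`. -/
theorem aut_RP_cyclic_two_pow (m : ℕ) (hm : 1 ≤ m) {G : Type*} [Group G] [Fintype G]
    (hG : IsCyclic G) (hcard : Fintype.card G = 2 ^ m) :
    Nonempty (RPAut G ≃* Multiplicative (ZMod 2) ×
      ((i : Finset.Icc 2 m) → Equiv.Perm (Fin (Nat.totient (2 ^ (i : ℕ)))))) := by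
  classical
  -- index bound facts
  have hIcc : ∀ i : (Finset.Icc 2 m), 2 ≤ (i : ℕ) ∧ (i : ℕ) ≤ m := fun i =>
    Finset.mem_Icc.mp i.2
  have hbig : ∀ i : (Finset.Icc 2 m), ¬ ((2:ℕ) ^ (i : ℕ) ∣ 2) := by
    intro i hdvd
    have h4 : (4:ℕ) ≤ 2 ^ (i : ℕ) := by
      calc (4:ℕ) = 2 ^ 2 := by norm_num
      _ ≤ 2 ^ (i : ℕ) := Nat.pow_le_pow_right (by norm_num) (hIcc i).1
    have := Nat.le_of_dvd (by norm_num) hdvd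
    omega
  have hclass : ∀ x : G, ¬ orderOf x ∣ 2 →
      ∃ i : (Finset.Icc 2 m), orderOf x = 2 ^ (i : ℕ) := by
    intro x hx
    obtain ⟨k, hk, he⟩ := auxClassify hcard x
    have h2k : 2 ≤ k := by
      by_contra h
      exact hx (he ▸ (by calc (2:ℕ)^k ∣ 2^1 := pow_dvd_pow 2 (by omega)
                          _ = 2 := pow_one 2))
    exact ⟨⟨k, Finset.mem_Icc.mpr ⟨h2k, hk⟩⟩, he⟩
  -- component equivalences
  let e₀ : {x : G // orderOf x ∣ 2} ≃ ZMod 2 :=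
    Fintype.equivOfCardEq (by rw [auxCardS hG hcard hm, ZMod.card])
  let eA : ∀ i : (Finset.Icc 2 m),
      {x : G // orderOf x = 2 ^ (i : ℕ)} ≃ Fin (Nat.totient (2 ^ (i : ℕ))) := fun i =>
    Fintype.equivFinOfCardEq (auxCardA hG hcard (hIcc i).2)
  -- the classification bijection
  let ι : ({x : G // orderOf x ∣ 2} ⊕ Σ i : (Finset.Icc 2 m), {x : G // orderOf x = 2 ^ (i : ℕ)}) → G :=
    Sum.elim (fun a => a.1) (fun p => p.2.1)
  have ιinj : Function.Injective ι := by
    rintro (⟨x, hx⟩ | ⟨i, ⟨x, hx⟩⟩) (⟨y, hy⟩ | ⟨j, ⟨y, hy⟩⟩) h <;>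
      simp only [ι, Sum.elim_inl, Sum.elim_inr] at h
    · subst h; rfl
    · exfalso; subst h; rw [hy] at hx; exact hbig j hx
    · exfalso; subst h; rw [hx] at hy; exact hbig i hy
    · subst h
      have hij : i = j := by
        have : (2:ℕ) ^ (i : ℕ) = 2 ^ (j : ℕ) := by rw [← hx, ← hy]
        exact Subtype.ext (Nat.pow_right_injective (le_refl 2) this)
      subst hij; rfl
  have ιsurj : Function.Surjective ι := by
    intro x
    by_cases h : orderOf x ∣ 2
    · exact ⟨Sum.inl ⟨x, h⟩, rfl⟩
    · obtain ⟨i, hi⟩ := hclass x h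
      exact ⟨Sum.inr ⟨i, ⟨x, hi⟩⟩, rfl⟩
  let F := Equiv.ofBijective ι ⟨ιinj, ιsurj⟩
  let E : G ≃ (ZMod 2 ⊕ Σ i : (Finset.Icc 2 m), Fin (Nat.totient (2 ^ (i : ℕ)))) :=
    F.symm.trans (Equiv.sumCongr e₀ (Equiv.sigmaCongrRight eA))
  -- computation rules for E
  have hEsmall : ∀ (x : G) (h : orderOf x ∣ 2), E x = Sum.inl (e₀ ⟨x, h⟩) := by
    intro x h
    have hF : F.symm x = Sum.inl ⟨x, h⟩ := F.symm_apply_eq.mpr rfl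
    simp [E, hF]
  have hEbig : ∀ (x : G) (i : (Finset.Icc 2 m)) (h : orderOf x = 2 ^ (i : ℕ)),
      E x = Sum.inr ⟨i, eA i ⟨x, h⟩⟩ := by
    intro x i h
    have hF : F.symm x = Sum.inr ⟨i, ⟨x, h⟩⟩ := F.symm_apply_eq.mpr rfl
    simp [E, hF]
  have hEsymm_small : ∀ z : ZMod 2, E.symm (Sum.inl z) = ((e₀.symm z) : {x : G // orderOf x ∣ 2}).1 := by
    intro z
    rw [Equiv.symm_apply_eq, hEsmall _ (e₀.symm z).2]
    simp
  have hEsymm_big : ∀ (i : (Finset.Icc 2 m)) (v : Fin (Nat.totient (2 ^ (i : ℕ)))),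
      E.symm (Sum.inr ⟨i, v⟩) = ((eA i).symm v).1 := by
    intro i v
    rw [Equiv.symm_apply_eq, hEbig _ i ((eA i).symm v).2]
    simp
  -- the homomorphism
  let Q : (Multiplicative (ZMod 2) × ((i : Finset.Icc 2 m) → Equiv.Perm (Fin (Nat.totient (2 ^ (i : ℕ)))))) →
      Equiv.Perm (ZMod 2 ⊕ Σ i : (Finset.Icc 2 m), Fin (Nat.totient (2 ^ (i : ℕ)))) :=
    fun t => Equiv.sumCongr (Equiv.addLeft (Multiplicative.toAdd t.1)) (Equiv.sigmaCongrRight t.2)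
  let Ψ : (Multiplicative (ZMod 2) × ((i : Finset.Icc 2 m) → Equiv.Perm (Fin (Nat.totient (2 ^ (i : ℕ)))))) →
      Equiv.Perm G := fun t => E.permCongr.symm (Q t)
  have hΨ : ∀ t x, Ψ t x = E.symm (Q t (E x)) := by
    intro t x
    simp [Ψ, Equiv.permCongr_symm, Equiv.permCongr_apply]
  have hmul : ∀ s t, Ψ (s * t) = Ψ s * Ψ t := by
    intro s t
    ext x
    rw [Equiv.Perm.mul_apply, hΨ, hΨ, hΨ, Equiv.apply_symm_apply]
    congr 1
    generalize E x = r
    rcases r with z | ⟨i, v⟩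
    · simp [Q, add_assoc]
    · simp [Q]
  -- order behaviour of Ψ
  have horder_small : ∀ t (x : G), orderOf x ∣ 2 → orderOf (Ψ t x) ∣ 2 := by
    intro t x h
    rw [hΨ, hEsmall x h]
    have : Q t (Sum.inl (e₀ ⟨x, h⟩)) = Sum.inl (Multiplicative.toAdd t.1 + e₀ ⟨x, h⟩) := by
      simp [Q]
    rw [this, hEsymm_small]
    exact (e₀.symm _).2
  have horder_big : ∀ t (x : G), ¬ orderOf x ∣ 2 → orderOf (Ψ t x) = orderOf x := by
    intro t x h
    obtain ⟨i, hi⟩ := hclass x h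
    rw [hΨ, hEbig x i hi]
    have : Q t (Sum.inr ⟨i, eA i ⟨x, hi⟩⟩) = Sum.inr ⟨i, t.2 i (eA i ⟨x, hi⟩)⟩ := by
      simp [Q]
    rw [this, hEsymm_big]
    rw [((eA i).symm _).2, hi]
  have hmem : ∀ t, Ψ t ∈ RPAut G := by
    intro t
    rw [auxMemRPAut hG hcard]
    intro x y
    by_cases hx : orderOf x ∣ 2 <;> by_cases hy : orderOf y ∣ 2
    · constructor
      · intro h
        have hxy : x = y := (Ψ t).injective (auxSmallInj hG (horder_small t x hx) h)
        rw [hxy]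
      · intro h
        have hxy : x = y := auxSmallInj hG hx h
        rw [hxy]
    · constructor
      · intro h
        exfalso
        apply hy
        rw [← horder_big t y hy, ← h]
        exact horder_small t x hx
      · intro h
        exfalso
        exact hy (h ▸ hx)
    · constructor
      · intro h
        exfalso
        apply hx
        rw [← horder_big t x hx, h]
        exact horder_small t y hy
      · intro h
        exfalso
        exact hx (h ▸ hy)
    · rw [horder_big t x hx, horder_big t y hy]
  -- injectivity
  have hinj : Function.Injective Ψ := by
    intro s t h
    have hQ : Q s = Q t := E.permCongr.symm.injective h
    have hQ' := Equiv.ext_iff.mp hQ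
    have h1 : s.1 = t.1 := by
      have := hQ' (Sum.inl (0 : ZMod 2))
      simp only [Q, Equiv.sumCongr_apply, Sum.map_inl, Equiv.coe_addLeft, add_zero] at this
      exact Multiplicative.toAdd.injective (Sum.inl.inj this)
    have h2 : s.2 = t.2 := by
      funext i
      apply Equiv.ext
      intro v
      have := hQ' (Sum.inr ⟨i, v⟩)
      simp only [Q, Equiv.sumCongr_apply, Sum.map_inr, Equiv.sigmaCongrRight_apply] at this
      have h3 := Sum.inr.inj this
      rw [Sigma.mk.inj_iff] at h3
      exact eq_of_heq h3.2
    exact Prod.ext h1 h2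
  -- surjectivity
  have hsurj : ∀ π : Equiv.Perm G, π ∈ RPAut G → ∃ t, Ψ t = π := by
    intro π hπ0
    rw [auxMemRPAut hG hcard] at hπ0
    have K1 : ∀ {x : G}, orderOf x ∣ 2 → orderOf (π x) ∣ 2 := fun hx => auxK1 hG hcard hπ0 hx
    have K2 : ∀ {x : G}, ¬ orderOf x ∣ 2 → orderOf (π x) = orderOf x := fun hx => auxK2 hG hcard hπ0 hx
    have hsub : ∀ i : (Finset.Icc 2 m), ∀ x : G,
        orderOf x = 2 ^ (i : ℕ) ↔ orderOf (π x) = 2 ^ (i : ℕ) := by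
      intro i x
      constructor
      · intro h
        rw [K2 (fun hc => hbig i (h ▸ hc)), h]
      · intro h
        have hxnot : ¬ orderOf x ∣ 2 := fun hc => hbig i (h ▸ K1 hc)
        rw [← K2 hxnot]
        exact h
    let σ : ∀ i : (Finset.Icc 2 m), Equiv.Perm (Fin (Nat.totient (2 ^ (i : ℕ)))) := fun i =>
      (eA i).permCongr (π.subtypePerm (fun x => (hsub i x).symm))
    let c : ZMod 2 := e₀ ⟨π (e₀.symm 0).1, K1 (e₀.symm 0).2⟩
    refine ⟨(Multiplicative.ofAdd c, σ), ?_⟩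
    ext x
    rw [hΨ]
    by_cases hx : orderOf x ∣ 2
    · rw [hEsmall x hx]
      have hQ1 : Q (Multiplicative.ofAdd c, σ) (Sum.inl (e₀ ⟨x, hx⟩)) =
          Sum.inl (c + e₀ ⟨x, hx⟩) := by simp [Q]
      rw [hQ1, hEsymm_small]
      have key : c + e₀ ⟨x, hx⟩ = e₀ ⟨π x, K1 hx⟩ := by
        have hf : Function.Injective
            (fun z : ZMod 2 => e₀ ⟨π (e₀.symm z).1, K1 (e₀.symm z).2⟩) := by
          intro z₁ z₂ h
          have h1 : π (e₀.symm z₁).1 = π (e₀.symm z₂).1 := by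
            have := e₀.injective h
            exact congrArg Subtype.val this
          have h2 : ((e₀.symm z₁) : {x : G // orderOf x ∣ 2}) = e₀.symm z₂ :=
            Subtype.ext (π.injective h1)
          exact e₀.symm.injective h2
        have hall : ∀ (g : ZMod 2 → ZMod 2), Function.Injective g → ∀ z, g z = g 0 + z := by
          decide
        have h1 := hall _ hf (e₀ ⟨x, hx⟩)
        have h2 : ((e₀.symm (e₀ ⟨x, hx⟩)) : {x : G // orderOf x ∣ 2}) = ⟨x, hx⟩ :=
          e₀.symm_apply_apply _
        have h3 : (⟨π x, K1 hx⟩ : {x : G // orderOf x ∣ 2}) =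
            ⟨π (e₀.symm (e₀ ⟨x, hx⟩)).1, K1 (e₀.symm (e₀ ⟨x, hx⟩)).2⟩ := by
          apply Subtype.ext
          simp only [h2]
        rw [h3]
        exact h1.symm
      rw [key, Equiv.symm_apply_apply]
    · obtain ⟨i, hi⟩ := hclass x hx
      rw [hEbig x i hi]
      have hQ2 : Q (Multiplicative.ofAdd c, σ) (Sum.inr ⟨i, eA i ⟨x, hi⟩⟩) =
          Sum.inr ⟨i, σ i (eA i ⟨x, hi⟩)⟩ := by simp [Q]
      rw [hQ2, hEsymm_big]
      simp [σ, Equiv.permCongr_apply, Equiv.Perm.subtypePerm_apply]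
  exact ⟨(MulEquiv.ofBijective
    (MonoidHom.mk' (fun t => (⟨Ψ t, hmem t⟩ : RPAut G)) (fun s t => Subtype.ext (hmul s t)))
    ⟨fun s t h => hinj (congrArg Subtype.val h),
     fun π => (hsurj π.1 π.2).imp (fun t ht => Subtype.ext ht)⟩).symm⟩
end

section
/- Let G be a finite group and let x, y be non-identity elements of G with ⟨y⟩ ⊊ ⟨x⟩. If the ≃-class x̂ is of Type I, then: (a) if ŷ is of Type I, or of Type IV with parameter (p,q) where p and q are both odd primes, then |ŷ| ≤ |x̂|, with equality when both x̂ and ŷ are of Type I, o(x) = 2·o(y) and o(y) is odd; (b) if ŷ is of Type IV with parameter (2,p) for a prime p and o(x) = 2p, then |ŷ| > |x̂|. -/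
open Subgroup Set

variable (G : Type*) [Group G]

section AuxLemmas
variable {G : Type*} [Group G]

lemma orderOf_eq_of_zpowers_eq {a b : G} (h : zpowers a = zpowers b) :
    orderOf a = orderOf b := by
  rw [← Nat.card_zpowers, ← Nat.card_zpowers, h]

lemma simEq_of_zpowers_eq {a b : G} (h : zpowers a = zpowers b) : simEq G a b := by
  intro z
  unfold rpAdj
  rw [h]

lemma zpowers_eq_of_le_of_dvd [Finite G] {a b : G} (h : zpowers a ≤ zpowers b)
    (ho : orderOf b ∣ orderOf a) : zpowers a = zpowers b :=
  Subgroup.eq_of_le_of_card_ge h (by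
    rw [Nat.card_zpowers, Nat.card_zpowers]
    exact Nat.le_of_dvd (orderOf_pos a) ho)

lemma mem_genCls_iff [Finite G] {x a : G} :
    a ∈ genCls G x ↔ a ∈ zpowers x ∧ orderOf a = orderOf x := by
  constructor
  · intro h
    have h' : zpowers a = zpowers x := h
    exact ⟨h' ▸ mem_zpowers a, orderOf_eq_of_zpowers_eq h'⟩
  · rintro ⟨h1, h2⟩
    exact zpowers_eq_of_le_of_dvd (zpowers_le.mpr h1) (h2 ▸ dvd_rfl)

lemma ncard_genCls [Fintype G] (x : G) : (genCls G x).ncard = (orderOf x).totient := by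
  classical
  haveI hcyc : IsCyclic (zpowers x) := ⟨⟨⟨x, mem_zpowers x⟩, fun a => by
    rcases mem_zpowers_iff.mp a.2 with ⟨k, hk⟩
    exact mem_zpowers_iff.mpr ⟨k, Subtype.ext (by simpa using hk)⟩⟩⟩
  have hcard : Fintype.card (zpowers x) = orderOf x := Fintype.card_zpowers
  have htot := IsCyclic.card_orderOf_eq_totient (α := zpowers x) (d := orderOf x)
    (by rw [hcard])
  have e : (genCls G x) ≃ {a : zpowers x // orderOf (a : G) = orderOf x} :=
    { toFun := fun y => ⟨⟨y.1, (mem_genCls_iff.mp y.2).1⟩, (mem_genCls_iff.mp y.2).2⟩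
      invFun := fun a => ⟨a.1.1, mem_genCls_iff.mpr ⟨a.1.2, a.2⟩⟩
      left_inv := fun y => rfl
      right_inv := fun a => rfl }
  rw [← Nat.card_coe_set_eq, Nat.card_congr e,
    Nat.card_congr (Equiv.subtypeEquivRight (fun a => by rw [Subgroup.orderOf_coe])),
    Nat.card_eq_fintype_card, Fintype.card_subtype]
  exact htot

lemma lt_zpowers_of_simEq [Finite G] {x y x₁ : G} {p : ℕ} (hp : p.Prime)
    (hx : x ≠ 1) (hsub : zpowers y < zpowers x) (hsim : simEq G x₁ y)
    (hord : orderOf x₁ = p) : zpowers x₁ < zpowers x := by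
  have hadj : rpAdj G x₁ x := (hsim x).mpr (Or.inl hsub)
  rcases hadj with h | h
  · exact h
  · exfalso
    have hdvd : orderOf x ∣ p := hord ▸ orderOf_dvd_of_mem_zpowers (h.le (mem_zpowers x))
    rcases hp.eq_one_or_self_of_dvd _ hdvd with h1 | h1
    · exact hx (orderOf_eq_one_iff.mp h1)
    · exact h.ne (zpowers_eq_of_le_of_dvd h.le (by rw [hord, h1]))

lemma hatCls_eq_union {y x₁ x₂ : G}
    (h₁ : simEq G x₁ y) (h₂ : simEq G x₂ y)
    (hall : ∀ z : G, simEq G z y → zpowers z = zpowers x₁ ∨ zpowers z = zpowers x₂) :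
    hatCls G y = genCls G x₁ ∪ genCls G x₂ := by
  ext z
  constructor
  · exact fun hz => hall z hz
  · rintro (hz | hz)
    · exact fun w => ((simEq_of_zpowers_eq hz) w).trans (h₁ w)
    · exact fun w => ((simEq_of_zpowers_eq hz) w).trans (h₂ w)

end AuxLemmas

section AuxLemmas2
variable {G : Type*} [Group G]
lemma ncard_hatCls_typeIV [Fintype G] {y x₁ x₂ : G}
    (h₁ : simEq G x₁ y) (h₂ : simEq G x₂ y)
    (hall : ∀ z : G, simEq G z y → zpowers z = zpowers x₁ ∨ zpowers z = zpowers x₂)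
    (hne : orderOf x₁ ≠ orderOf x₂) :
    (hatCls G y).ncard = (orderOf x₁).totient + (orderOf x₂).totient := by
  have hdisj : Disjoint (genCls G x₁) (genCls G x₂) := by
    rw [Set.disjoint_left]
    intro a ha1 ha2
    have e1 : zpowers a = zpowers x₁ := ha1
    have e2 : zpowers a = zpowers x₂ := ha2
    exact hne ((orderOf_eq_of_zpowers_eq e1).symm.trans (orderOf_eq_of_zpowers_eq e2))
  rw [hatCls_eq_union h₁ h₂ hall,
    Set.ncard_union_eq hdisj (Set.toFinite _) (Set.toFinite _), ncard_genCls, ncard_genCls]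

end AuxLemmas2

/-- for non-identity `x, y` with `⟨y⟩ ⊊ ⟨x⟩` and `x̂` of Type I:
(a) if `ŷ` is of Type I or of Type IV with both parameters odd primes, then `|ŷ| ≤ |x̂|`,
with equality when both classes are of Type I, `o(x) = 2·o(y)` and `o(y)` is odd;
(b) if `ŷ` is of Type IV with parameter `(2, p)` and `o(x) = 2p`, then `|ŷ| > |x̂|`. -/
theorem typeI_card_compare {G : Type*} [Group G] [Fintype G] (x y : G)
    (hx : x ≠ 1) (hy : y ≠ 1) (hsub : zpowers y < zpowers x) (hTx : TypeI G x) :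
    ((TypeI G y ∨ ∃ p q : ℕ, p ≠ 2 ∧ q ≠ 2 ∧ TypeIV G y p q) →
        (hatCls G y).ncard ≤ (hatCls G x).ncard ∧
        (TypeI G y ∧ orderOf x = 2 * orderOf y ∧ Odd (orderOf y) →
          (hatCls G y).ncard = (hatCls G x).ncard)) ∧
    (∀ p : ℕ, TypeIV G y 2 p → orderOf x = 2 * p →
        (hatCls G x).ncard < (hatCls G y).ncard) := by
  have hdvd_yx : orderOf y ∣ orderOf x := orderOf_dvd_of_mem_zpowers (hsub.le (mem_zpowers y))
  have hox_pos : 0 < orderOf x := orderOf_pos x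
  have hxcard : (hatCls G x).ncard = (orderOf x).totient := by
    rw [TypeI] at hTx; rw [hTx, ncard_genCls]
  constructor
  · intro hcase
    constructor
    · rcases hcase with hTy | ⟨p, q, hp2, hq2, hp, hq, hpq, ⟨x₁, x₂, h₁, h₂, ho₁, ho₂, hall⟩, -⟩
      · rw [TypeI] at hTy
        rw [hTy, ncard_genCls, hxcard]
        exact Nat.le_of_dvd (Nat.totient_pos.mpr hox_pos) (Nat.totient_dvd_of_dvd hdvd_yx)
      · have hpx := lt_zpowers_of_simEq hp hx hsub h₁ ho₁
        have hqx := lt_zpowers_of_simEq hq hx hsub h₂ ho₂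
        have hpd : p ∣ orderOf x := ho₁ ▸ orderOf_dvd_of_mem_zpowers (hpx.le (mem_zpowers x₁))
        have hqd : q ∣ orderOf x := ho₂ ▸ orderOf_dvd_of_mem_zpowers (hqx.le (mem_zpowers x₂))
        have hcop : Nat.Coprime p q := (Nat.coprime_primes hp hq).mpr hpq
        have hpqd : p * q ∣ orderOf x := Nat.Coprime.mul_dvd_of_dvd_of_dvd hcop hpd hqd
        have hycard := ncard_hatCls_typeIV h₁ h₂ hall (by rw [ho₁, ho₂]; exact hpq)
        rw [hycard, hxcard, ho₁, ho₂]
        have h1 : (p * q).totient ≤ (orderOf x).totient :=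
          Nat.le_of_dvd (Nat.totient_pos.mpr hox_pos) (Nat.totient_dvd_of_dvd hpqd)
        refine le_trans ?_ h1
        rw [Nat.totient_mul hcop, Nat.totient_prime hp, Nat.totient_prime hq]
        have hp3 : 3 ≤ p := by rcases hp.two_le.lt_or_eq with h | h; omega; exact absurd h.symm hp2
        have hq3 : 3 ≤ q := by rcases hq.two_le.lt_or_eq with h | h; omega; exact absurd h.symm hq2
        obtain ⟨a, rfl⟩ : ∃ a, p = a + 3 := ⟨p - 3, by omega⟩
        obtain ⟨b, rfl⟩ : ∃ b, q = b + 3 := ⟨q - 3, by omega⟩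
        have e1 : a + 3 - 1 = a + 2 := by omega
        have e2 : b + 3 - 1 = b + 2 := by omega
        rw [e1, e2]
        nlinarith
    · rintro ⟨hTy, hxeq, hodd⟩
      rw [TypeI] at hTy
      rw [hTy, ncard_genCls, hxcard, hxeq]
      have hcop : Nat.Coprime 2 (orderOf y) := by
        rw [Nat.Prime.coprime_iff_not_dvd Nat.prime_two]
        intro hdvd
        rcases hodd with ⟨k, hk⟩
        omega
      rw [Nat.totient_mul hcop, Nat.totient_two, one_mul]
  · rintro p ⟨h2, hp, h2p, ⟨x₁, x₂, h₁, h₂, ho₁, ho₂, hall⟩, -⟩ hox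
    have hycard := ncard_hatCls_typeIV h₁ h₂ hall (by rw [ho₁, ho₂]; exact h2p)
    have hcop : Nat.Coprime 2 p := (Nat.coprime_primes h2 hp).mpr h2p
    rw [hycard, hxcard, hox, ho₁, ho₂, Nat.totient_mul hcop, Nat.totient_two, one_mul,
      Nat.totient_prime hp]
    have := hp.two_le
    omega
end
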